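/- Let Q(x) = x(x−r)(x−1)(x−t₁)(x−t₂) with 0 ≤ r ≤ 1 and 3 ≤ t₁ ≤ t₂, and let ξ₁ ≤ ξ₂ ≤ ξ₃ ≤ ξ₄ be the roots of Q′ counted with multiplicity. Then ξ₄ − ξ₃ > ξ₂ − ξ₁. -/

import Mathlib

set_option maxHeartbeats 1000000

/-- Auxiliary positivity certificate (with `u = 1 - r`, `a = t₁ - 3`, `b = t₂ - t₁`):
`-10125 * Q'(x₀) > 0` where `x₀ = (2/5)(1+r+t₁+t₂) - (2+r)/3`. -/
lemma D_ineq (u a b : ℝ) (hu0 : 0 ≤ u) (hu1 : u ≤ 1) (ha : 0 ≤ a) (hb : 0 ≤ b) :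
    (0:ℝ) < (7776) + (15228)*b + (24624)*b*b + (10692)*b*b*b + (1296)*b*b*b*b + (30456)*a + (30456)*a*b + (26892)*a*b*b + (5508)*a*b*b*b + (30456)*a*a + (16524)*a*a*b + (6804)*a*a*b*b + (11016)*a*a*a + (2592)*a*a*a*b + (1296)*a*a*a*a + (14472)*u + (12582)*u*b + (10044)*u*b*b + (1836)*u*b*b*b + (25164)*u*a + (11961)*u*a*b + (4536)*u*a*b*b + (11961)*u*a*a + (2592)*u*a*a*b + (1728)*u*a*a*a + (-2916)*u*u + (-729)*u*u*b + (-324)*u*u*b*b + (-1458)*u*u*a + (-81)*u*u*a*b + (-81)*u*u*a*a + (-207)*u*u*u + (-69)*u*u*u*b + (-138)*u*u*u*a + (11)*u*u*u*u := by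
  linarith [(hu0), (mul_nonneg (hu0) hu0), (mul_nonneg (mul_nonneg (hu0) hu0) hu0), (mul_nonneg (mul_nonneg (mul_nonneg (hu0) hu0) hu0) hu0), (ha), (mul_nonneg (hu0) ha), (mul_nonneg (mul_nonneg (hu0) hu0) ha), (mul_nonneg (mul_nonneg (mul_nonneg (hu0) hu0) hu0) ha), (mul_nonneg (mul_nonneg (mul_nonneg (mul_nonneg (hu0) hu0) hu0) hu0) ha), (hb), (mul_nonneg (hu0) hb), (mul_nonneg (mul_nonneg (hu0) hu0) hb), (mul_nonneg (mul_nonneg (mul_nonneg (hu0) hu0) hu0) hb), (mul_nonneg (mul_nonneg (mul_nonneg (mul_nonneg (hu0) hu0) hu0) hu0) hb), (mul_nonneg (ha) hb), (mul_nonneg (mul_nonneg (hu0) ha) hb), (mul_nonneg (mul_nonneg (mul_nonneg (hu0) hu0) ha) hb), (mul_nonneg (mul_nonneg (mul_nonneg (mul_nonneg (hu0) hu0) hu0) ha) hb), (mul_nonneg (mul_nonneg (mul_nonneg (mul_nonneg (mul_nonneg (hu0) hu0) hu0) hu0) ha) hb), (mul_nonneg (ha) ha), (mul_nonneg (mul_nonneg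 (hu0) ha) ha), (mul_nonneg (mul_nonneg (mul_nonneg (hu0) hu0) ha) ha), (mul_nonneg (mul_nonneg (mul_nonneg (mul_nonneg (hu0) hu0) hu0) ha) ha), (mul_nonneg (mul_nonneg (mul_nonneg (mul_nonneg (mul_nonneg (hu0) hu0) hu0) hu0) ha) ha), (mul_nonneg (hb) hb), (mul_nonneg (mul_nonneg (hu0) hb) hb), (mul_nonneg (mul_nonneg (mul_nonneg (hu0) hu0) hb) hb), (mul_nonneg (mul_nonneg (mul_nonneg (mul_nonneg (hu0) hu0) hu0) hb) hb), (mul_nonneg (mul_nonneg (mul_nonneg (mul_nonneg (mul_nonneg (hu0) hu0) hu0) hu0) hb) hb), (mul_nonneg (mul_nonneg (ha) ha) ha), (mul_nonneg (mul_nonneg (mul_nonneg (hu0) ha) ha) ha), (mul_nonneg (mul_nonneg (mul_nonneg (mul_nonneg (hu0) hu0) ha) ha) ha), (mul_nonneg (mul_nonneg (mul_nonneg (mul_nonneg (mul_nonneg (hu0) hu0) hu0) ha) ha) ha), (mul_nonneg (mul_nonneg (mul_nonneg (mul_nonneg (mul_nonneg (mul_nonneg (hu0) hu0) hu0) hu0)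 ha) ha) ha), (mul_nonneg (mul_nonneg (hb) hb) hb), (mul_nonneg (mul_nonneg (mul_nonneg (hu0) hb) hb) hb), (mul_nonneg (mul_nonneg (mul_nonneg (mul_nonneg (hu0) hu0) hb) hb) hb), (mul_nonneg (mul_nonneg (mul_nonneg (mul_nonneg (mul_nonneg (hu0) hu0) hu0) hb) hb) hb), (mul_nonneg (mul_nonneg (mul_nonneg (mul_nonneg (mul_nonneg (mul_nonneg (hu0) hu0) hu0) hu0) hb) hb) hb), (mul_nonneg (mul_nonneg (ha) hb) hb), (mul_nonneg (mul_nonneg (mul_nonneg (hu0) ha) hb) hb), (mul_nonneg (mul_nonneg (mul_nonneg (mul_nonneg (hu0) hu0) ha) hb) hb), (mul_nonneg (mul_nonneg (mul_nonneg (mul_nonneg (mul_nonneg (hu0) hu0) hu0) ha) hb) hb), (mul_nonneg (mul_nonneg (mul_nonneg (mul_nonneg (mul_nonneg (mul_nonneg (hu0) hu0) hu0) hu0) ha) hb) hb), (mul_nonneg (mul_nonneg (ha) ha) hb), (mul_nonneg (mul_nonneg (mul_nonneg (hu0) ha) ha) hb), (mul_nonneg (mul_nonneg (mul_nonneg (mul_nonneg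 (hu0) hu0) ha) ha) hb), (mul_nonneg (mul_nonneg (mul_nonneg (mul_nonneg (mul_nonneg (hu0) hu0) hu0) ha) ha) hb), (mul_nonneg (mul_nonneg (mul_nonneg (mul_nonneg (mul_nonneg (mul_nonneg (hu0) hu0) hu0) hu0) ha) ha) hb), (mul_nonneg (mul_nonneg (mul_nonneg (ha) ha) ha) ha), (mul_nonneg (mul_nonneg (mul_nonneg (mul_nonneg (hu0) ha) ha) ha) ha), (mul_nonneg (mul_nonneg (mul_nonneg (mul_nonneg (mul_nonneg (hu0) hu0) ha) ha) ha) ha), (mul_nonneg (mul_nonneg (mul_nonneg (mul_nonneg (mul_nonneg (mul_nonneg (hu0) hu0) hu0) ha) ha) ha) ha), (mul_nonneg (mul_nonneg (mul_nonneg (mul_nonneg (mul_nonneg (mul_nonneg (mul_nonneg (hu0) hu0) hu0) hu0) ha) ha) ha) ha), (mul_nonneg (mul_nonneg (mul_nonneg (hb) hb) hb) hb), (mul_nonneg (mul_nonneg (mul_nonneg (mul_nonneg (hu0) hb) hb) hb) hb), (mul_nonneg (mul_nonneg (mul_nonneg (mul_nonneg (mul_nonneg (hu0) hu0) hb) hb)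 hb) hb), (mul_nonneg (mul_nonneg (mul_nonneg (mul_nonneg (mul_nonneg (mul_nonneg (hu0) hu0) hu0) hb) hb) hb) hb), (mul_nonneg (mul_nonneg (mul_nonneg (mul_nonneg (mul_nonneg (mul_nonneg (mul_nonneg (hu0) hu0) hu0) hu0) hb) hb) hb) hb), (mul_nonneg (mul_nonneg (mul_nonneg (ha) ha) ha) hb), (mul_nonneg (mul_nonneg (mul_nonneg (mul_nonneg (hu0) ha) ha) ha) hb), (mul_nonneg (mul_nonneg (mul_nonneg (mul_nonneg (mul_nonneg (hu0) hu0) ha) ha) ha) hb), (mul_nonneg (mul_nonneg (mul_nonneg (mul_nonneg (mul_nonneg (mul_nonneg (hu0) hu0) hu0) ha) ha) ha) hb), (mul_nonneg (mul_nonneg (mul_nonneg (mul_nonneg (mul_nonneg (mul_nonneg (mul_nonneg (hu0) hu0) hu0) hu0) ha) ha) ha) hb), (mul_nonneg (mul_nonneg (mul_nonneg (ha) hb) hb) hb), (mul_nonneg (mul_nonneg (mul_nonneg (mul_nonneg (hu0) ha) hb) hb) hb), (mul_nonneg (mul_nonneg (mul_nonneg (mul_nonneg (mul_nonneg (hu0)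 hu0) ha) hb) hb) hb), (mul_nonneg (mul_nonneg (mul_nonneg (mul_nonneg (mul_nonneg (mul_nonneg (hu0) hu0) hu0) ha) hb) hb) hb), (mul_nonneg (mul_nonneg (mul_nonneg (mul_nonneg (mul_nonneg (mul_nonneg (mul_nonneg (hu0) hu0) hu0) hu0) ha) hb) hb) hb), (mul_nonneg (mul_nonneg (mul_nonneg (ha) ha) hb) hb), (mul_nonneg (mul_nonneg (mul_nonneg (mul_nonneg (hu0) ha) ha) hb) hb), (mul_nonneg (mul_nonneg (mul_nonneg (mul_nonneg (mul_nonneg (hu0) hu0) ha) ha) hb) hb), (mul_nonneg (mul_nonneg (mul_nonneg (mul_nonneg (mul_nonneg (mul_nonneg (hu0) hu0) hu0) ha) ha) hb) hb), (mul_nonneg (mul_nonneg (mul_nonneg (mul_nonneg (mul_nonneg (mul_nonneg (mul_nonneg (hu0) hu0) hu0) hu0) ha) ha) hb) hb), (mul_nonneg hu0 (sub_nonneg.2 hu1)), (mul_nonneg (mul_nonneg hu0 hu0) (sub_nonneg.2 hu1)), (mul_nonneg (mul_nonneg hu0 (sub_nonneg.2 hu1)) (ha)), (mul_nonneg (mul_nonneg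 (mul_nonneg hu0 hu0) (sub_nonneg.2 hu1)) (ha)), (mul_nonneg (mul_nonneg hu0 (sub_nonneg.2 hu1)) (hb)), (mul_nonneg (mul_nonneg (mul_nonneg hu0 hu0) (sub_nonneg.2 hu1)) (hb)), (mul_nonneg (mul_nonneg hu0 (sub_nonneg.2 hu1)) (mul_nonneg (ha) hb)), (mul_nonneg (mul_nonneg (mul_nonneg hu0 hu0) (sub_nonneg.2 hu1)) (mul_nonneg (ha) hb)), (mul_nonneg (mul_nonneg hu0 (sub_nonneg.2 hu1)) (mul_nonneg (ha) ha)), (mul_nonneg (mul_nonneg (mul_nonneg hu0 hu0) (sub_nonneg.2 hu1)) (mul_nonneg (ha) ha)), (mul_nonneg (mul_nonneg hu0 (sub_nonneg.2 hu1)) (mul_nonneg (hb) hb)), (mul_nonneg (mul_nonneg (mul_nonneg hu0 hu0) (sub_nonneg.2 hu1)) (mul_nonneg (hb) hb))]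

/-- If an ordered quartic product is negative at `p`, then `p` lies strictly
inside the first or the second root pair. -/
lemma neg_prod {p a b c d : ℝ} (hab : a ≤ b) (hbc : b ≤ c) (hcd : c ≤ d)
    (h : 5 * (p - a) * (p - b) * (p - c) * (p - d) < 0) :
    (a < p ∧ p < b) ∨ (c < p ∧ p < d) := by
  rcases le_or_gt p a with h1 | h1
  · exfalso
    have hA : 0 ≤ (p - a) * (p - b) := mul_nonneg_of_nonpos_of_nonpos (by linarith) (by linarith)
    have hB : 0 ≤ (p - c) * (p - d) := mul_nonneg_of_nonpos_of_nonpos (by linarith) (by linarith)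
    nlinarith [mul_nonneg hA hB]
  · rcases lt_or_ge p b with h2 | h2
    · exact Or.inl ⟨h1, h2⟩
    · rcases le_or_gt p c with h3 | h3
      · exfalso
        have hA : 0 ≤ (p - a) * (p - b) := mul_nonneg (by linarith) (by linarith)
        have hB : 0 ≤ (p - c) * (p - d) := mul_nonneg_of_nonpos_of_nonpos (by linarith) (by linarith)
        nlinarith [mul_nonneg hA hB]
      · rcases lt_or_ge p d with h4 | h4
        · exact Or.inr ⟨h3, h4⟩
        · exfalso
          have hA : 0 ≤ (p - a) * (p - b) := mul_nonneg (by linarith) (by linarith)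
          have hB : 0 ≤ (p - c) * (p - d) := mul_nonneg (by linarith) (by linarith)
          nlinarith [mul_nonneg hA hB]

/-- For `Q(x) = x(x-r)(x-1)(x-t₁)(x-t₂)` with `0 ≤ r ≤ 1` and `3 ≤ t₁ ≤ t₂`, the roots of `Q'` satisfy `ξ₄ - ξ₃ > ξ₂ - ξ₁`. -/
theorem Q_family_xi4_gt
    (r t₁ t₂ : ℝ) (hr0 : 0 ≤ r) (hr1 : r ≤ 1) (ht₁ : 3 ≤ t₁) (ht : t₁ ≤ t₂)
    (ξ₁ ξ₂ ξ₃ ξ₄ : ℝ) (hξ12 : ξ₁ ≤ ξ₂) (hξ23 : ξ₂ ≤ ξ₃) (hξ34 : ξ₃ ≤ ξ₄)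
    (hder : ∀ x : ℝ,
      deriv (fun t : ℝ => t * (t - r) * (t - 1) * (t - t₁) * (t - t₂)) x
        = 5 * (x - ξ₁) * (x - ξ₂) * (x - ξ₃) * (x - ξ₄)) :
    ξ₄ - ξ₃ > ξ₂ - ξ₁ := by
  -- explicit derivative
  have hE : ∀ x : ℝ,
      deriv (fun t : ℝ => t * (t - r) * (t - 1) * (t - t₁) * (t - t₂)) x
        = (x-r)*(x-1)*(x-t₁)*(x-t₂) + x*(x-1)*(x-t₁)*(x-t₂) + x*(x-r)*(x-t₁)*(x-t₂)
          + x*(x-r)*(x-1)*(x-t₂) + x*(x-r)*(x-1)*(x-t₁) := by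
    intro x
    have h := (((((hasDerivAt_id x).mul ((hasDerivAt_id x).sub_const r)).mul
        ((hasDerivAt_id x).sub_const 1)).mul ((hasDerivAt_id x).sub_const t₁)).mul
        ((hasDerivAt_id x).sub_const t₂))
    simp only [id_eq, Pi.mul_def] at h
    rw [h.deriv]; ring
  have key : ∀ x : ℝ,
      (x-r)*(x-1)*(x-t₁)*(x-t₂) + x*(x-1)*(x-t₁)*(x-t₂) + x*(x-r)*(x-t₁)*(x-t₂)
        + x*(x-r)*(x-1)*(x-t₂) + x*(x-r)*(x-1)*(x-t₁)
        = 5 * (x - ξ₁) * (x - ξ₂) * (x - ξ₃) * (x - ξ₄) :=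
    fun x => (hE x).symm.trans (hder x)
  -- sum of the critical points (coefficient of x³)
  have E1 : ξ₁ + ξ₂ + ξ₃ + ξ₄ = 4/5 * (1 + r + t₁ + t₂) := by
    linear_combination (1/60 : ℝ) * (key 2 - key (-2) - 2 * key 1 + 2 * key (-1))
  obtain ⟨x₀, hx₀def⟩ : ∃ y : ℝ, y = 2/5*(1+r+t₁+t₂) - (2+r)/3 := ⟨_, rfl⟩
  have hx₀ : 32/15 ≤ x₀ := by rw [hx₀def]; linarith
  -- Q'(1/2) < 0
  have kB : 5 * ((1:ℝ)/2 - ξ₁) * ((1:ℝ)/2 - ξ₂) * ((1:ℝ)/2 - ξ₃) * ((1:ℝ)/2 - ξ₄) < 0 := by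
    have h := key ((1:ℝ)/2)
    nlinarith [h, mul_nonneg (by linarith : (0:ℝ) ≤ t₁ - 3) (by linarith : (0:ℝ) ≤ t₂ - t₁),
      sq_nonneg (t₂ - t₁), mul_nonneg hr0 (by linarith : (0:ℝ) ≤ t₁ - 3),
      mul_nonneg hr0 (by linarith : (0:ℝ) ≤ t₂ - 3)]
  -- Q'(1) ≥ 0
  have kF : 0 ≤ 5 * ((1:ℝ) - ξ₁) * ((1:ℝ) - ξ₂) * ((1:ℝ) - ξ₃) * ((1:ℝ) - ξ₄) := by
    have h := key 1
    nlinarith [h, mul_nonneg (sub_nonneg.2 hr1)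
      (mul_nonneg (by linarith : (0:ℝ) ≤ t₁ - 1) (by linarith : (0:ℝ) ≤ t₂ - 1))]
  -- Q'((2+r)/3) ≥ 0
  have kG : 0 ≤ 5 * ((2+r)/3 - ξ₁) * ((2+r)/3 - ξ₂) * ((2+r)/3 - ξ₃) * ((2+r)/3 - ξ₄) := by
    have h := key ((2+r)/3)
    nlinarith [h,
      mul_nonneg (sub_nonneg.2 hr1) (mul_nonneg (by linarith : (0:ℝ) ≤ t₁-3) (by linarith : (0:ℝ) ≤ t₂-t₁)),
      mul_nonneg (mul_nonneg (sub_nonneg.2 hr1) hr0) (by linarith : (0:ℝ) ≤ t₁-3),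
      mul_nonneg (mul_nonneg (sub_nonneg.2 hr1) hr0) (by linarith : (0:ℝ) ≤ t₂-t₁),
      mul_nonneg (mul_nonneg (mul_nonneg (sub_nonneg.2 hr1) hr0) (by linarith : (0:ℝ) ≤ t₁-3)) (by linarith : (0:ℝ) ≤ t₂-t₁),
      mul_nonneg (mul_nonneg (mul_nonneg (sub_nonneg.2 hr1) hr0) (by linarith : (0:ℝ) ≤ t₁-3)) (by linarith : (0:ℝ) ≤ t₁-3),
      mul_nonneg (mul_nonneg (sub_nonneg.2 hr1) (sub_nonneg.2 hr1)) hr0,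
      mul_nonneg (sub_nonneg.2 hr1) hr0,
      mul_nonneg (mul_nonneg (sub_nonneg.2 hr1) (by linarith : (0:ℝ) ≤ t₁-3)) (by linarith : (0:ℝ) ≤ t₁-3),
      sq_nonneg (t₁-3), sq_nonneg (1-r), mul_nonneg hr0 hr0]
  -- Q'(x₀) < 0
  have kD : 5 * (x₀ - ξ₁) * (x₀ - ξ₂) * (x₀ - ξ₃) * (x₀ - ξ₄) < 0 := by
    have h := key (2/5*(1+r+t₁+t₂) - (2+r)/3)
    have hD := D_ineq (1 - r) (t₁ - 3) (t₂ - t₁) (by linarith) (by linarith) (by linarith)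
      (by linarith)
    rw [hx₀def]
    linarith [h, hD]
  have cB := neg_prod hξ12 hξ23 hξ34 kB
  have cD := neg_prod hξ12 hξ23 hξ34 kD
  rcases cB with ⟨hB1, hB2⟩ | ⟨hB3, _⟩
  · rcases cD with ⟨_, hD2⟩ | ⟨hD3, hD4⟩
    · -- ξ₁ < 1/2 and ξ₂ > x₀ ≥ 32/15 : contradicts Q'(1) ≥ 0
      exfalso
      have p1 : (0:ℝ) < 1 - ξ₁ := by linarith
      have p2 : (0:ℝ) < ξ₂ - 1 := by linarith
      have p3 : (0:ℝ) < ξ₃ - 1 := by linarith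
      have p4 : (0:ℝ) < ξ₄ - 1 := by linarith
      nlinarith [kF, mul_pos (mul_pos (mul_pos p1 p2) p3) p4]
    · -- main case : ξ₁ < 1/2 < ξ₂, ξ₃ < x₀ < ξ₄
      have hc2 : ξ₂ ≤ (2+r)/3 := by
        by_contra hc
        push_neg at hc
        have p1 : (0:ℝ) < (2+r)/3 - ξ₁ := by linarith
        have p2 : (0:ℝ) < ξ₂ - (2+r)/3 := by linarith
        have p3 : (0:ℝ) < ξ₃ - (2+r)/3 := by linarith
        have p4 : (0:ℝ) < ξ₄ - (2+r)/3 := by linarith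
        nlinarith [kG, mul_pos (mul_pos (mul_pos p1 p2) p3) p4]
      have : ξ₂ + ξ₃ < (2+r)/3 + x₀ := by linarith
      rw [hx₀def] at this
      linarith [E1]
  · -- ξ₃ < 1/2 : then ξ₂ < 1/2 as well
    rcases cD with ⟨_, hD2⟩ | ⟨hD3, hD4⟩
    · linarith
    · linarith [E1]
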